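/- Let r ≥ 1, M an a_r-module, and β ∈ ℂ[t,t⁻¹]. Then for all l, m ∈ ℤ and all w ∈ N(M,0): Σ_{i=0}^{2r+2} binom(2r+2,i)·(−1)^{2r+2−i}·D^β_{l−m−i}(D^β_{m+i}(w)) = Σ_{i=0}^{2r+2} binom(2r+2,i)·(−1)^{2r+2−i}·D_{l−m−i}(D_{m+i}(w)); that is, the operator ω^{(2r+2)}_{l,m} computed with the twisted operators D^β coincides with the one computed with the untwisted operators D. -/

import Mathlib

open Finsupp

variable {M : Type*} [AddCommGroup M] [Module ℂ M]

/-- `(M, T)` is an `a_r`-module: `M` carries operators `T_0, …, T_r` with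
`T_i∘T_j − T_j∘T_i = (j−i)·T_{i+j}` for `i+j ≤ r` and `T_i∘T_j = T_j∘T_i` for `i+j > r`. -/
def IsArModule (r : ℕ) (T : ℕ → Module.End ℂ M) : Prop :=
  (∀ i j, i ≤ r → j ≤ r → i + j ≤ r →
      T i ∘ₗ T j - T j ∘ₗ T i = (((j : ℂ) - (i : ℂ)) • T (i + j))) ∧
  (∀ i j, i ≤ r → j ≤ r → r < i + j → T i ∘ₗ T j = T j ∘ₗ T i)

/-- A subspace `U ⊆ M` is an `a_r`-submodule if `T_i U ⊆ U` for all `0 ≤ i ≤ r`. -/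
def IsArSubmodule (r : ℕ) (T : ℕ → Module.End ℂ M) (U : Submodule ℂ M) : Prop :=
  ∀ i ≤ r, ∀ v ∈ U, T i v ∈ U

/-- `M` is a simple `a_r`-module: nonzero, and the only `a_r`-submodules are `0` and `M`. -/
def IsSimpleArModule (r : ℕ) (T : ℕ → Module.End ℂ M) : Prop :=
  (∃ v : M, v ≠ 0) ∧
    ∀ U : Submodule ℂ M, IsArSubmodule r T U → U = ⊥ ∨ U = ⊤

/-- The operator `D_m` on `N(M, α) = ⊕_{n ∈ ℤ} M ⊗ t^n` (finitely supported functions `ℤ → M`,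
with `v ⊗ t^n` the function `Finsupp.single n v`), given by
`D_m (v ⊗ t^n) = ((α+n)•v + Σ_{i=0}^r (m^{i+1}/(i+1)!) • T_i v) ⊗ t^{n+m}`. -/
noncomputable def Dop (r : ℕ) (T : ℕ → Module.End ℂ M) (α : ℂ) (m : ℤ) :
    (ℤ →₀ M) →ₗ[ℂ] (ℤ →₀ M) :=
  Finsupp.lsum ℂ fun n : ℤ =>
    (Finsupp.lsingle (n + m) : M →ₗ[ℂ] ℤ →₀ M) ∘ₗ
      ((α + (n : ℂ)) • (LinearMap.id : M →ₗ[ℂ] M) +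
        ∑ i ∈ Finset.range (r + 1),
          ((m : ℂ) ^ (i + 1) / (Nat.factorial (i + 1) : ℂ)) • (T i : M →ₗ[ℂ] M))

/-- The operator `ω^{(s)}_{l,m} = Σ_{i=0}^s binom(s,i)·(−1)^{s−i}·D_{l−m−i}∘D_{m+i}`. -/
noncomputable def omegaOp (r : ℕ) (T : ℕ → Module.End ℂ M) (α : ℂ) (s : ℕ) (l m : ℤ) :
    (ℤ →₀ M) →ₗ[ℂ] (ℤ →₀ M) :=
  ∑ i ∈ Finset.range (s + 1),
    ((s.choose i : ℂ) * (-1) ^ (s - i)) •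
      (Dop r T α (l - m - (i : ℤ)) ∘ₗ Dop r T α (m + (i : ℤ)))

/-- The multiplication operator by `β t^n`, where `β = Σ_j b_j t^j` is a Laurent polynomial
(encoded as the finitely supported family `β : ℤ →₀ ℂ` of its coefficients):
`v ⊗ t^k ↦ Σ_j b_j • (v ⊗ t^{k+n+j})`. -/
noncomputable def Bop (β : ℤ →₀ ℂ) (n : ℤ) : (ℤ →₀ M) →ₗ[ℂ] (ℤ →₀ M) :=
  Finsupp.lsum ℂ fun k : ℤ =>
    ∑ j ∈ β.support, β j • (Finsupp.lsingle (k + n + j) : M →ₗ[ℂ] ℤ →₀ M)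

/-- The twisted operator `D^β_n = D_n + β t^n` on `N(M,β) = N(M,0)`:
`D^β_n (v ⊗ t^k) = D_n (v ⊗ t^k) + Σ_j b_j • (v ⊗ t^{k+n+j})`. -/
noncomputable def DBop (r : ℕ) (T : ℕ → Module.End ℂ M) (β : ℤ →₀ ℂ) (n : ℤ) :
    (ℤ →₀ M) →ₗ[ℂ] (ℤ →₀ M) :=
  Dop r T 0 n + Bop β n

private lemma altMono (s e : ℕ) (he : e < s) :
    ∑ i ∈ Finset.range (s + 1), ((s.choose i : ℂ) * (-1) ^ (s - i)) * (i : ℂ) ^ e = 0 := by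
  have key : ∀ e : ℕ, ∀ s : ℕ, e < s →
      (fwdDiff (1 : ℕ))^[s] (fun i : ℕ => (i : ℂ) ^ e) = 0 := by
    intro e
    induction e using Nat.strong_induction_on with
    | _ e IH =>
      intro s hs
      obtain ⟨s', rfl⟩ : ∃ s', s = s' + 1 := ⟨s - 1, by omega⟩
      rw [Function.iterate_succ_apply]
      have hΔ : fwdDiff (1 : ℕ) (fun i : ℕ => (i : ℂ) ^ e)
          = ∑ d ∈ Finset.range e, fun i : ℕ => (e.choose d : ℂ) * (i : ℂ) ^ d := by
        funext i
        simp only [fwdDiff, Finset.sum_apply]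
        push_cast
        rw [add_pow]
        rw [Finset.sum_range_succ]
        simp [mul_comm]
      rw [hΔ, fwdDiff_iter_finset_sum]
      rw [Finset.sum_eq_zero]
      intro d hd
      have : (fun i : ℕ => (e.choose d : ℂ) * (i : ℂ) ^ d)
          = (e.choose d : ℂ) • fun i : ℕ => (i : ℂ) ^ d := by
        funext i; simp [smul_eq_mul]
      rw [Finset.mem_range] at hd
      rw [this, fwdDiff_iter_const_smul, IH d hd s' (by omega)]
      simp
  have h0 := congrFun (key e s he) 0
  rw [fwdDiff_iter_eq_sum_shift] at h0
  simp only [smul_eq_mul, Pi.zero_apply, zero_add, smul_eq_mul, nsmul_eq_mul, mul_one] at h0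
  rw [← h0]
  apply Finset.sum_congr rfl
  intro i hi
  simp only [smul_eq_mul, zsmul_eq_mul]
  push_cast
  ring

private lemma altAffine (s d : ℕ) (hd : d < s) (a b : ℂ) :
    ∑ i ∈ Finset.range (s + 1),
      ((s.choose i : ℂ) * (-1) ^ (s - i)) * (a + b * (i : ℂ)) ^ d = 0 := by
  have hexp : ∀ i : ℕ, (a + b * (i : ℂ)) ^ d
      = ∑ e ∈ Finset.range (d + 1), (b ^ e * a ^ (d - e) * (d.choose e : ℂ)) * (i : ℂ) ^ e := by
    intro i
    rw [add_comm, add_pow]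
    exact Finset.sum_congr rfl fun e _ => by rw [mul_pow]; ring
  simp only [hexp, Finset.mul_sum]
  rw [Finset.sum_comm]
  apply Finset.sum_eq_zero
  intro e he
  rw [Finset.mem_range] at he
  have h := altMono s e (by omega)
  calc ∑ i ∈ Finset.range (s + 1),
        ((s.choose i : ℂ) * (-1) ^ (s - i)) * ((b ^ e * a ^ (d - e) * (d.choose e : ℂ)) * (i : ℂ) ^ e)
      = (b ^ e * a ^ (d - e) * (d.choose e : ℂ)) *
          ∑ i ∈ Finset.range (s + 1), ((s.choose i : ℂ) * (-1) ^ (s - i)) * (i : ℂ) ^ e := by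
        rw [Finset.mul_sum]; exact Finset.sum_congr rfl fun i _ => by ring
    _ = 0 := by rw [h, mul_zero]

private lemma altAffineSmul {V : Type*} [AddCommGroup V] [Module ℂ V] (s d : ℕ) (hd : d < s)
    (a b : ℂ) (u : V) :
    ∑ i ∈ Finset.range (s + 1), ((s.choose i : ℂ) * (-1) ^ (s - i)) •
      ((a + b * (i : ℂ)) ^ d • u) = 0 := by
  simp only [smul_smul, ← Finset.sum_smul, altAffine s d hd a b, zero_smul]

private lemma altConstSmul {V : Type*} [AddCommGroup V] [Module ℂ V] (s : ℕ) (hs : 0 < s)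
    (u : V) :
    ∑ i ∈ Finset.range (s + 1), ((s.choose i : ℂ) * (-1) ^ (s - i)) • u = 0 := by
  rw [← Finset.sum_smul]
  have h := altMono s 0 hs
  simp only [pow_zero, mul_one] at h
  rw [h, zero_smul]

private lemma Dop_single (r : ℕ) (T : ℕ → Module.End ℂ M) (α : ℂ) (n k : ℤ) (v : M) :
    Dop r T α n (Finsupp.single k v) = Finsupp.single (k + n)
      ((α + (k : ℂ)) • v + ∑ p ∈ Finset.range (r + 1),
        (((n : ℂ)) ^ (p + 1) / ((p + 1).factorial : ℂ)) • T p v) := by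
  simp [Dop, Finsupp.lsum_single, LinearMap.add_apply, LinearMap.sum_apply,
    LinearMap.smul_apply]

private lemma Bop_single (β : ℤ →₀ ℂ) (n k : ℤ) (v : M) :
    Bop β n (Finsupp.single k v)
      = ∑ j ∈ β.support, β j • Finsupp.single (k + n + j) v := by
  simp [Bop, Finsupp.lsum_single, LinearMap.sum_apply, Finsupp.smul_single]


private lemma single_sum_eq (A : ℤ) (c : ℕ → ℂ) (t : Finset ℕ) (g : ℕ → M) :
    ∑ x ∈ t, c x • Finsupp.single A (g x) = Finsupp.single A (∑ x ∈ t, c x • g x) := by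
  simp only [← Finsupp.lsingle_apply (R := ℂ) A, ← map_smul, ← map_sum]

private lemma S3_zero (β : ℤ →₀ ℂ) (s : ℕ) (hs : 0 < s) (a b : ℤ) (w : ℤ →₀ M) :
    ∑ i ∈ Finset.range (s + 1), ((s.choose i : ℂ) * (-1) ^ (s - i)) •
      Bop β (a - (i : ℤ)) (Bop β (b + (i : ℤ)) w) = 0 := by
  induction w using Finsupp.induction_linear with
  | zero => simp
  | add f g hf hg =>
      simp only [map_add, smul_add, Finset.sum_add_distrib, hf, hg, add_zero]
  | single k v =>
      have hBB : ∀ i : ℕ, Bop β (a - (i : ℤ)) (Bop β (b + (i : ℤ)) (Finsupp.single k v))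
          = ∑ j ∈ β.support, ∑ j' ∈ β.support,
              (β j * β j') • Finsupp.single (k + a + b + j + j') v := by
        intro i
        rw [Bop_single, map_sum]
        apply Finset.sum_congr rfl
        intro j _
        rw [map_smul, Bop_single, Finset.smul_sum]
        apply Finset.sum_congr rfl
        intro j' _
        rw [smul_smul]
        congr 2
        ring
      simp only [hBB]
      exact altConstSmul s hs _

private lemma S1_zero (r : ℕ) (T : ℕ → Module.End ℂ M) (β : ℤ →₀ ℂ) (s : ℕ)
    (hs : r + 1 < s) (a b : ℤ) (w : ℤ →₀ M) :
    ∑ i ∈ Finset.range (s + 1), ((s.choose i : ℂ) * (-1) ^ (s - i)) •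
      Dop r T 0 (a - (i : ℤ)) (Bop β (b + (i : ℤ)) w) = 0 := by
  induction w using Finsupp.induction_linear with
  | zero => simp
  | add f g hf hg =>
      simp only [map_add, smul_add, Finset.sum_add_distrib, hf, hg, add_zero]
  | single k v =>
      have hDB : ∀ i : ℕ, Dop r T 0 (a - (i : ℤ)) (Bop β (b + (i : ℤ)) (Finsupp.single k v))
          = ∑ j ∈ β.support, Finsupp.single (k + a + b + j)
              (((((k : ℂ) + (b : ℂ) + (j : ℂ)) + 1 * (i : ℂ)) ^ 1) • (β j • v)
                + ∑ p ∈ Finset.range (r + 1),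
                    (((a : ℂ) + (-1) * (i : ℂ)) ^ (p + 1)) •
                      ((1 / ((p + 1).factorial : ℂ)) • (β j • T p v))) := by
        intro i
        rw [Bop_single, map_sum]
        apply Finset.sum_congr rfl
        intro j _
        rw [map_smul, Dop_single, Finsupp.smul_single]
        rw [show k + (b + (i : ℤ)) + j + (a - (i : ℤ)) = k + a + b + j by ring]
        congr 1
        rw [smul_add, Finset.smul_sum]
        congr 1
        · push_cast
          match_scalars
          ring
        · apply Finset.sum_congr rfl
          intro p _
          push_cast
          match_scalars
          ring
      simp only [hDB, Finset.smul_sum]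
      rw [Finset.sum_comm]
      apply Finset.sum_eq_zero
      intro j _
      rw [single_sum_eq]
      rw [show (0 : ℤ →₀ M) = Finsupp.single (k + a + b + j) (0 : M) by simp]
      congr 1
      simp only [smul_add, Finset.sum_add_distrib]
      rw [altAffineSmul s 1 (by omega) _ _ _, zero_add]
      simp only [Finset.smul_sum]
      rw [Finset.sum_comm]
      apply Finset.sum_eq_zero
      intro p hp
      rw [Finset.mem_range] at hp
      exact altAffineSmul s (p + 1) (by omega) _ _ _

private lemma S2_zero (r : ℕ) (T : ℕ → Module.End ℂ M) (β : ℤ →₀ ℂ) (s : ℕ)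
    (hs : r + 1 < s) (a b : ℤ) (w : ℤ →₀ M) :
    ∑ i ∈ Finset.range (s + 1), ((s.choose i : ℂ) * (-1) ^ (s - i)) •
      Bop β (a - (i : ℤ)) (Dop r T 0 (b + (i : ℤ)) w) = 0 := by
  induction w using Finsupp.induction_linear with
  | zero => simp
  | add f g hf hg =>
      simp only [map_add, smul_add, Finset.sum_add_distrib, hf, hg, add_zero]
  | single k v =>
      have hBD : ∀ i : ℕ, Bop β (a - (i : ℤ)) (Dop r T 0 (b + (i : ℤ)) (Finsupp.single k v))
          = ∑ j ∈ β.support, Finsupp.single (k + a + b + j)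
              (((0 : ℂ) + (k : ℂ)) • (β j • v)
                + ∑ p ∈ Finset.range (r + 1),
                    (((b : ℂ) + 1 * (i : ℂ)) ^ (p + 1)) •
                      ((1 / ((p + 1).factorial : ℂ)) • (β j • T p v))) := by
        intro i
        rw [Dop_single, Bop_single]
        apply Finset.sum_congr rfl
        intro j _
        rw [Finsupp.smul_single]
        rw [show k + (b + (i : ℤ)) + (a - (i : ℤ)) + j = k + a + b + j by ring]
        congr 1
        rw [smul_add, Finset.smul_sum]
        congr 1
        · match_scalars
          ring
        · apply Finset.sum_congr rfl
          intro p _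
          push_cast
          match_scalars
          ring
      simp only [hBD, Finset.smul_sum]
      rw [Finset.sum_comm]
      apply Finset.sum_eq_zero
      intro j _
      rw [single_sum_eq]
      rw [show (0 : ℤ →₀ M) = Finsupp.single (k + a + b + j) (0 : M) by simp]
      congr 1
      simp only [smul_add, Finset.sum_add_distrib]
      rw [altConstSmul s (by omega) _, zero_add]
      simp only [Finset.smul_sum]
      rw [Finset.sum_comm]
      apply Finset.sum_eq_zero
      intro p hp
      rw [Finset.mem_range] at hp
      exact altAffineSmul s (p + 1) (by omega) _ _ _

/-- for `r ≥ 1`, an `a_r`-module `M` and a Laurent polynomial `β`, the operator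
`ω^{(2r+2)}_{l,m}` computed with the twisted operators `D^β` coincides with the one computed
with the untwisted operators `D`. -/
theorem twisted_omega_eq_untwisted (r : ℕ) (hr : 1 ≤ r) (T : ℕ → Module.End ℂ M)
    (hT : IsArModule r T) (β : ℤ →₀ ℂ) (l m : ℤ) (w : ℤ →₀ M) :
    ∑ i ∈ Finset.range (2 * r + 3),
        (((2 * r + 2).choose i : ℂ) * (-1) ^ (2 * r + 2 - i)) •
          DBop r T β (l - m - (i : ℤ)) (DBop r T β (m + (i : ℤ)) w)
      = ∑ i ∈ Finset.range (2 * r + 3),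
          (((2 * r + 2).choose i : ℂ) * (-1) ^ (2 * r + 2 - i)) •
            Dop r T 0 (l - m - (i : ℤ)) (Dop r T 0 (m + (i : ℤ)) w) := by
  have hrange : 2 * r + 3 = (2 * r + 2) + 1 := by omega
  rw [hrange]
  simp only [DBop, LinearMap.add_apply, map_add, smul_add, Finset.sum_add_distrib]
  rw [S1_zero r T β (2 * r + 2) (by omega) (l - m) m w,
    S2_zero r T β (2 * r + 2) (by omega) (l - m) m w,
    S3_zero β (2 * r + 2) (by omega) (l - m) m w]
  abel
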